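/- arXiv:2210.04652 — 4 statements merged into one kernel-verified Lean document; each statement's English description precedes it below -/
import Mathlib

section
/- For the Static Black-Peg AB Game with 2 pegs and c ≥ 2 colors: if a feasible strategy contains three (1,1)-questions, then on at least one of the two pegs all c colors occur among the strategy's questions. -/
/-- The answer of a question `Q` to a secret `S`: the number of pegs where they agree. -/
def answer {p c : ℕ} (Q S : Fin p → Fin c) : ℕ :=
  (Finset.univ.filter fun i => Q i = S i).card

/-- A strategy (a list of pairwise distinct injective codes) is feasible if the list of
answers determines every injective secret uniquely. -/
def Feasible {p c : ℕ} (qs : List (Fin p → Fin c)) : Prop :=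
  qs.Nodup ∧ (∀ Q ∈ qs, Function.Injective Q) ∧
    ∀ S S' : Fin p → Fin c, Function.Injective S → Function.Injective S' →
      qs.map (fun Q => answer Q S) = qs.map (fun Q => answer Q S') → S = S'

/-- The number of questions of the strategy `qs` having color `q` on peg `i`. -/
def occ {p c : ℕ} (qs : List (Fin p → Fin c)) (i : Fin p) (q : Fin c) : ℕ :=
  qs.countP fun Q => decide (Q i = q)

lemma answer_eq_two {c : ℕ} (Q S : Fin 2 → Fin c) :
    answer Q S = (if Q 0 = S 0 then 1 else 0) + (if Q 1 = S 1 then 1 else 0) := by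
  unfold answer
  rw [Finset.card_filter, Fin.sum_univ_two]

lemma inj_pair {c : ℕ} {x y : Fin c} (h : x ≠ y) : Function.Injective ![x, y] := by
  intro i j e
  fin_cases i <;> fin_cases j <;> simp_all

lemma occ_one_unique {c : ℕ} {qs : List (Fin 2 → Fin c)} {i : Fin 2} {q : Fin c}
    (h : occ qs i q = 1) {Q Q' : Fin 2 → Fin c} (hQ : Q ∈ qs) (hQ' : Q' ∈ qs)
    (e : Q i = q) (e' : Q' i = q) : Q = Q' := by
  unfold occ at h
  rw [List.countP_eq_length_filter, List.length_eq_one_iff] at h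
  obtain ⟨x, hx⟩ := h
  have m1 : Q ∈ qs.filter (fun Q => decide (Q i = q)) :=
    List.mem_filter.2 ⟨hQ, by simp [e]⟩
  have m2 : Q' ∈ qs.filter (fun Q => decide (Q i = q)) :=
    List.mem_filter.2 ⟨hQ', by simp [e']⟩
  rw [hx] at m1 m2
  simp at m1 m2
  rw [m1, m2]

theorem statement7 (c : ℕ) (hc : 2 ≤ c) (qs : List (Fin 2 → Fin c))
    (hqs : Feasible qs) (Q₁ Q₂ Q₃ : Fin 2 → Fin c)
    (h₁ : Q₁ ∈ qs) (h₂ : Q₂ ∈ qs) (h₃ : Q₃ ∈ qs)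
    (hne12 : Q₁ ≠ Q₂) (hne13 : Q₁ ≠ Q₃) (hne23 : Q₂ ≠ Q₃)
    (o₁ : occ qs 0 (Q₁ 0) = 1 ∧ occ qs 1 (Q₁ 1) = 1)
    (o₂ : occ qs 0 (Q₂ 0) = 1 ∧ occ qs 1 (Q₂ 1) = 1)
    (o₃ : occ qs 0 (Q₃ 0) = 1 ∧ occ qs 1 (Q₃ 1) = 1) :
    ∃ i : Fin 2, ∀ q : Fin c, ∃ Q ∈ qs, Q i = q := by
  by_contra hcon
  push_neg at hcon
  obtain ⟨a, ha⟩ := hcon 0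
  obtain ⟨b, hb⟩ := hcon 1
  -- core: any (1,1)-question `Q` with `Q 1 ≠ a` and `Q 0 ≠ b` gives a contradiction
  have core : ∀ Q ∈ qs, occ qs 0 (Q 0) = 1 → occ qs 1 (Q 1) = 1 →
      Q 1 ≠ a → Q 0 ≠ b → False := by
    intro Q hQ occ0 occ1 hya hxb
    set S : Fin 2 → Fin c := ![a, Q 1] with hS
    set T : Fin 2 → Fin c := ![Q 0, b] with hT
    have hSinj : Function.Injective S := inj_pair (fun e => hya e.symm)
    have hTinj : Function.Injective T := inj_pair hxb
    have hmap : qs.map (fun R => answer R S) = qs.map (fun R => answer R T) := by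
      apply List.map_congr_left
      intro R hR
      have hR0 : R 0 ≠ a := ha R hR
      have hR1 : R 1 ≠ b := hb R hR
      rw [answer_eq_two, answer_eq_two]
      have hS0 : S 0 = a := rfl
      have hS1 : S 1 = Q 1 := rfl
      have hT0 : T 0 = Q 0 := rfl
      have hT1 : T 1 = b := rfl
      rw [hS0, hS1, hT0, hT1, if_neg hR0, if_neg hR1]
      by_cases e1 : R 1 = Q 1
      · have : R = Q := occ_one_unique occ1 hR hQ e1 rfl
        rw [if_pos e1, if_pos (by rw [this])]
      · rw [if_neg e1, if_neg (fun e0 => e1 (by rw [occ_one_unique occ0 hR hQ e0 rfl]))]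
    have heq : S = T := hqs.2.2 S T hSinj hTinj hmap
    have : S 0 = T 0 := by rw [heq]
    exact ha Q hQ (by simpa [hS, hT] using this.symm)
  -- at most one question has `Q j 1 = a`, at most one has `Q j 0 = b`
  have uniqA : ∀ {P P' : Fin 2 → Fin c}, P ∈ qs → P' ∈ qs → occ qs 1 (P 1) = 1 →
      P 1 = a → P' 1 = a → P = P' := by
    intro P P' hP hP' hocc e e'
    exact occ_one_unique hocc hP hP' rfl (by rw [e', e])
  have uniqB : ∀ {P P' : Fin 2 → Fin c}, P ∈ qs → P' ∈ qs → occ qs 0 (P 0) = 1 →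
      P 0 = b → P' 0 = b → P = P' := by
    intro P P' hP hP' hocc e e'
    exact occ_one_unique hocc hP hP' rfl (by rw [e', e])
  by_cases hA1 : Q₁ 1 = a
  · -- Q₂ and Q₃ have `· 1 ≠ a`
    have hA2 : Q₂ 1 ≠ a := fun e => hne12 (uniqA h₁ h₂ o₁.2 hA1 e)
    have hA3 : Q₃ 1 ≠ a := fun e => hne13 (uniqA h₁ h₃ o₁.2 hA1 e)
    by_cases hB2 : Q₂ 0 = b
    · have hB3 : Q₃ 0 ≠ b := fun e => hne23 (uniqB h₂ h₃ o₂.1 hB2 e)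
      exact core Q₃ h₃ o₃.1 o₃.2 hA3 hB3
    · exact core Q₂ h₂ o₂.1 o₂.2 hA2 hB2
  · by_cases hB1 : Q₁ 0 = b
    · have hB2 : Q₂ 0 ≠ b := fun e => hne12 (uniqB h₁ h₂ o₁.1 hB1 e)
      have hB3 : Q₃ 0 ≠ b := fun e => hne13 (uniqB h₁ h₃ o₁.1 hB1 e)
      by_cases hA2 : Q₂ 1 = a
      · have hA3 : Q₃ 1 ≠ a := fun e => hne23 (uniqA h₂ h₃ o₂.2 hA2 e)
        exact core Q₃ h₃ o₃.1 o₃.2 hA3 hB3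
      · exact core Q₂ h₂ o₂.1 o₂.2 hA2 hB2
    · exact core Q₁ h₁ o₁.1 o₁.2 hA1 hB1
end

section
/- For the Static Black-Peg AB Game with 2 pegs and c ≥ 2 colors: a feasible strategy cannot contain four (1,1)-questions. -/
lemma occ_unique {c : ℕ} (qs : List (Fin 2 → Fin c)) (i : Fin 2)
    (P Q : Fin 2 → Fin c) (hP : P ∈ qs) (hQ : Q ∈ qs)
    (hocc : occ qs i (P i) = 1) (h : Q i = P i) : Q = P := by
  rw [occ, List.countP_eq_length_filter] at hocc
  obtain ⟨x, hx⟩ := List.length_eq_one_iff.mp hocc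
  have hPx : P ∈ qs.filter (fun R => decide (R i = P i)) := by
    simp [List.mem_filter, hP]
  have hQx : Q ∈ qs.filter (fun R => decide (R i = P i)) := by
    simp [List.mem_filter, hQ, h]
  rw [hx] at hPx hQx
  simp at hPx hQx
  rw [hPx, hQx]

lemma answer_two {c : ℕ} (R S : Fin 2 → Fin c) :
    answer R S = (if R 0 = S 0 then 1 else 0) + (if R 1 = S 1 then 1 else 0) := by
  rw [answer, Finset.card_filter, Fin.sum_univ_two]

lemma inj2 {c : ℕ} (a b : Fin c) (h : a ≠ b) : Function.Injective ![a, b] := by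
  intro x y hxy
  fin_cases x <;> fin_cases y <;> simp_all

lemma killer {c : ℕ} (qs : List (Fin 2 → Fin c)) (hqs : Feasible qs)
    (P Q : Fin 2 → Fin c) (hP : P ∈ qs) (hQ : Q ∈ qs) (hne : P ≠ Q)
    (hoP0 : occ qs 0 (P 0) = 1) (hoQ0 : occ qs 0 (Q 0) = 1)
    (hoQ1 : occ qs 1 (Q 1) = 1) (hoP1 : occ qs 1 (P 1) = 1)
    (h1 : P 0 ≠ Q 1) (h2 : Q 0 ≠ P 1) : False := by
  obtain ⟨hnd, hinj, hfeas⟩ := hqs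
  have hPQ0 : P 0 ≠ Q 0 := fun h => hne ((occ_unique qs 0 P Q hP hQ hoP0 h.symm).symm)
  have hPQ1 : P 1 ≠ Q 1 := fun h => hne ((occ_unique qs 1 P Q hP hQ hoP1 h.symm).symm)
  set S : Fin 2 → Fin c := ![P 0, Q 1] with hS
  set S' : Fin 2 → Fin c := ![Q 0, P 1] with hS'
  have hSinj : Function.Injective S := inj2 _ _ h1
  have hS'inj : Function.Injective S' := inj2 _ _ h2
  have heq : S = S' := by
    apply hfeas S S' hSinj hS'inj
    apply List.map_congr_left
    intro R hR
    rw [answer_two, answer_two]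
    have hS0 : S 0 = P 0 := by simp [hS]
    have hS1 : S 1 = Q 1 := by simp [hS]
    have hS'0 : S' 0 = Q 0 := by simp [hS']
    have hS'1 : S' 1 = P 1 := by simp [hS']
    rw [hS0, hS1, hS'0, hS'1]
    by_cases hRP : R = P
    · subst hRP
      simp [hPQ0, hPQ1, hR]
    · by_cases hRQ : R = Q
      · subst hRQ
        simp [Ne.symm hPQ0, Ne.symm hPQ1]
      · have h0P : R 0 ≠ P 0 := fun h => hRP (occ_unique qs 0 P R hP hR hoP0 h)
        have h0Q : R 0 ≠ Q 0 := fun h => hRQ (occ_unique qs 0 Q R hQ hR hoQ0 h)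
        have h1P : R 1 ≠ P 1 := fun h => hRP (occ_unique qs 1 P R hP hR hoP1 h)
        have h1Q : R 1 ≠ Q 1 := fun h => hRQ (occ_unique qs 1 Q R hQ hR hoQ1 h)
        simp [h0P, h0Q, h1P, h1Q]
  have : S 0 = S' 0 := by rw [heq]
  simp [hS, hS'] at this
  exact hPQ0 this

theorem statement8 (c : ℕ) (hc : 2 ≤ c) (qs : List (Fin 2 → Fin c))
    (hqs : Feasible qs) :
    ¬ ∃ Q₁ Q₂ Q₃ Q₄ : Fin 2 → Fin c,
      Q₁ ∈ qs ∧ Q₂ ∈ qs ∧ Q₃ ∈ qs ∧ Q₄ ∈ qs ∧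
      Q₁ ≠ Q₂ ∧ Q₁ ≠ Q₃ ∧ Q₁ ≠ Q₄ ∧ Q₂ ≠ Q₃ ∧ Q₂ ≠ Q₄ ∧ Q₃ ≠ Q₄ ∧
      (occ qs 0 (Q₁ 0) = 1 ∧ occ qs 1 (Q₁ 1) = 1) ∧
      (occ qs 0 (Q₂ 0) = 1 ∧ occ qs 1 (Q₂ 1) = 1) ∧
      (occ qs 0 (Q₃ 0) = 1 ∧ occ qs 1 (Q₃ 1) = 1) ∧
      (occ qs 0 (Q₄ 0) = 1 ∧ occ qs 1 (Q₄ 1) = 1) := by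
  rintro ⟨Q₁, Q₂, Q₃, Q₄, h1, h2, h3, h4, n12, n13, n14, n23, n24, n34,
    ⟨o1a, o1b⟩, ⟨o2a, o2b⟩, ⟨o3a, o3b⟩, ⟨o4a, o4b⟩⟩
  -- peg-1 colors pairwise distinct
  have b23 : Q₂ 1 ≠ Q₃ 1 := fun h => n23 ((occ_unique qs 1 Q₂ Q₃ h2 h3 o2b h.symm).symm)
  have b24 : Q₂ 1 ≠ Q₄ 1 := fun h => n24 ((occ_unique qs 1 Q₂ Q₄ h2 h4 o2b h.symm).symm)
  have b13 : Q₁ 1 ≠ Q₃ 1 := fun h => n13 ((occ_unique qs 1 Q₁ Q₃ h1 h3 o1b h.symm).symm)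
  have b14 : Q₁ 1 ≠ Q₄ 1 := fun h => n14 ((occ_unique qs 1 Q₁ Q₄ h1 h4 o1b h.symm).symm)
  have a34 : Q₃ 0 ≠ Q₄ 0 := fun h => n34 ((occ_unique qs 0 Q₃ Q₄ h3 h4 o3a h.symm).symm)
  by_cases h12a : Q₁ 0 = Q₂ 1
  · by_cases h31 : Q₃ 0 = Q₁ 1
    · exact killer qs hqs Q₁ Q₄ h1 h4 n14 o1a o4a o4b o1b
        (h12a ▸ b24) (fun h => a34 (h31 ▸ h).symm)
    · exact killer qs hqs Q₁ Q₃ h1 h3 n13 o1a o3a o3b o1b (h12a ▸ b23) h31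
  · by_cases h21 : Q₂ 0 = Q₁ 1
    · by_cases h32 : Q₃ 0 = Q₂ 1
      · exact killer qs hqs Q₂ Q₄ h2 h4 n24 o2a o4a o4b o2b
          (h21 ▸ b14) (fun h => a34 (h32 ▸ h).symm)
      · exact killer qs hqs Q₂ Q₃ h2 h3 n23 o2a o3a o3b o2b (h21 ▸ b13) h32
    · exact killer qs hqs Q₁ Q₂ h1 h2 n12 o1a o2a o2b o1b h12a h21
end

section
/- For the Static Black-Peg AB Game with 3 pegs and c ≥ 5 colors: if a feasible strategy contains two (1,1,1)-questions, then no other question of the strategy is a (1,1,⋆)-question, a (1,⋆,1)-question, or a (⋆,1,1)-question; equivalently, no question other than these two has two distinct pegs on each of which its color occurs in exactly one question of the strategy. -/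
lemma answer_eq {c : ℕ} (R S : Fin 3 → Fin c) :
    answer R S = (if R 0 = S 0 then 1 else 0) + (if R 1 = S 1 then 1 else 0) +
      (if R 2 = S 2 then 1 else 0) := by
  rw [answer, Finset.card_filter, Fin.sum_univ_three]

lemma occ_unique_s13 {c : ℕ} {qs : List (Fin 3 → Fin c)} (hnd : qs.Nodup) {i : Fin 3} {x : Fin c}
    (h : occ qs i x = 1) {X : Fin 3 → Fin c} (hX : X ∈ qs) (hXi : X i = x) :
    ∀ R ∈ qs, R i = x → R = X := by
  intro R hR hRi
  by_contra hne
  have hndf := hnd.filter (fun Q => decide (Q i = x))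
  have hXf : X ∈ qs.filter (fun Q => decide (Q i = x)) := List.mem_filter.2 ⟨hX, by simp [hXi]⟩
  have hRf : R ∈ qs.filter (fun Q => decide (Q i = x)) := List.mem_filter.2 ⟨hR, by simp [hRi]⟩
  have h2 : 2 ≤ (qs.filter (fun Q => decide (Q i = x))).length := by
    have hsub : ({R, X} : Finset (Fin 3 → Fin c)) ⊆ (qs.filter (fun Q => decide (Q i = x))).toFinset := by
      intro y hy
      simp only [Finset.mem_insert, Finset.mem_singleton] at hy
      rcases hy with rfl | rfl
      · exact List.mem_toFinset.2 hRf
      · exact List.mem_toFinset.2 hXf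
    calc 2 = ({R, X} : Finset (Fin 3 → Fin c)).card := by
            rw [Finset.card_insert_of_notMem (by simpa using hne), Finset.card_singleton]
      _ ≤ (qs.filter (fun Q => decide (Q i = x))).toFinset.card := Finset.card_le_card hsub
      _ ≤ _ := List.toFinset_card_le _
  unfold occ at h
  rw [List.countP_eq_length_filter] at h
  rw [h] at h2
  exact absurd h2 (by norm_num)

lemma exists_fresh {c : ℕ} (hc : 5 ≤ c) (x1 x2 x3 x4 : Fin c) :
    ∃ w : Fin c, w ≠ x1 ∧ w ≠ x2 ∧ w ≠ x3 ∧ w ≠ x4 := by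
  have hcard : ({x1, x2, x3, x4} : Finset (Fin c)).card ≤ 4 := by
    apply le_trans (Finset.card_insert_le _ _)
    have := Finset.card_insert_le x2 ({x3, x4} : Finset (Fin c))
    have := Finset.card_insert_le x3 ({x4} : Finset (Fin c))
    simp only [Finset.card_singleton] at *
    omega
  have : (({x1, x2, x3, x4} : Finset (Fin c))ᶜ).Nonempty := by
    rw [← Finset.card_pos, Finset.card_compl, Fintype.card_fin]
    omega
  obtain ⟨w, hw⟩ := this
  simp only [Finset.mem_compl, Finset.mem_insert, Finset.mem_singleton, not_or] at hw
  exact ⟨w, hw.1, hw.2.1, hw.2.2.1, hw.2.2.2⟩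

lemma inj3 {c : ℕ} {x y z : Fin c} (h1 : x ≠ y) (h2 : x ≠ z) (h3 : y ≠ z) :
    Function.Injective ![x, y, z] := by
  intro i j hij
  fin_cases i <;> fin_cases j <;> simp_all

lemma clash {c : ℕ} {qs : List (Fin 3 → Fin c)} (hqs : Feasible qs) {S S' : Fin 3 → Fin c}
    (hS : Function.Injective S) (hS' : Function.Injective S') (hne : S ≠ S')
    (h : ∀ R ∈ qs, answer R S = answer R S') : False :=
  hne (hqs.2.2 S S' hS hS' (List.map_congr_left h))

lemma answer_vec {c : ℕ} (R : Fin 3 → Fin c) (x y z : Fin c) :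
    answer R ![x,y,z] = (if R 0 = x then 1 else 0) + (if R 1 = y then 1 else 0) +
      (if R 2 = z then 1 else 0) := answer_eq R ![x,y,z]

lemma swap01 {c : ℕ} (hc : 5 ≤ c) {qs : List (Fin 3 → Fin c)} (hqs : Feasible qs)
    {X Y : Fin 3 → Fin c} (hX : X ∈ qs) (hY : Y ∈ qs) (hXY : X ≠ Y)
    (uX0 : ∀ R ∈ qs, R 0 = X 0 → R = X) (uX1 : ∀ R ∈ qs, R 1 = X 1 → R = X)
    (uY0 : ∀ R ∈ qs, R 0 = Y 0 → R = Y) (uY1 : ∀ R ∈ qs, R 1 = Y 1 → R = Y)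
    (h1 : X 0 ≠ Y 1) (h2 : Y 0 ≠ X 1) : False := by
  obtain ⟨w, hw1, hw2, hw3, hw4⟩ := exists_fresh hc (X 0) (Y 1) (Y 0) (X 1)
  have hXY0 : X 0 ≠ Y 0 := fun h => hXY (uY0 X hX h)
  have hXY1 : X 1 ≠ Y 1 := fun h => hXY (uY1 X hX h)
  refine clash hqs (S := ![X 0, Y 1, w]) (S' := ![Y 0, X 1, w])
    (inj3 h1 hw1.symm hw2.symm) (inj3 h2 hw3.symm hw4.symm)
    (fun h => hXY0 (congrFun h 0)) ?_
  intro R hR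
  rw [answer_vec, answer_vec]
  by_cases hRX : R = X
  · subst hRX; simp [hXY0, hXY1]
  by_cases hRY : R = Y
  · subst hRY; simp [hXY0.symm, hXY1.symm]
  · have n1 : R 0 ≠ X 0 := fun h => hRX (uX0 R hR h)
    have n2 : R 1 ≠ Y 1 := fun h => hRY (uY1 R hR h)
    have n3 : R 0 ≠ Y 0 := fun h => hRY (uY0 R hR h)
    have n4 : R 1 ≠ X 1 := fun h => hRX (uX1 R hR h)
    simp [n1, n2, n3, n4]

lemma cyc {c : ℕ} {qs : List (Fin 3 → Fin c)} (hqs : Feasible qs)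
    {X Y Z : Fin 3 → Fin c} (hX : X ∈ qs) (hY : Y ∈ qs) (hZ : Z ∈ qs)
    (hXY : X ≠ Y) (hXZ : X ≠ Z) (hYZ : Y ≠ Z)
    (uX0 : ∀ R ∈ qs, R 0 = X 0 → R = X) (uX1 : ∀ R ∈ qs, R 1 = X 1 → R = X)
    (uY1 : ∀ R ∈ qs, R 1 = Y 1 → R = Y) (uY2 : ∀ R ∈ qs, R 2 = Y 2 → R = Y)
    (uZ2 : ∀ R ∈ qs, R 2 = Z 2 → R = Z) (uZ0 : ∀ R ∈ qs, R 0 = Z 0 → R = Z)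
    (h1 : X 0 ≠ Y 1) (h2 : X 0 ≠ Z 2) (h3 : Y 1 ≠ Z 2)
    (h4 : Z 0 ≠ X 1) (h5 : Z 0 ≠ Y 2) (h6 : X 1 ≠ Y 2) : False := by
  have hXZ0 : X 0 ≠ Z 0 := fun h => hXZ (uZ0 X hX h)
  have hXY1 : X 1 ≠ Y 1 := fun h => hXY (uY1 X hX h)
  have hXY2 : X 2 ≠ Y 2 := fun h => hXY (uY2 X hX h)
  have hXZ2 : X 2 ≠ Z 2 := fun h => hXZ (uZ2 X hX h)
  have hYX0 : Y 0 ≠ X 0 := fun h => hXY.symm (uX0 Y hY h)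
  have hYZ0 : Y 0 ≠ Z 0 := fun h => hYZ (uZ0 Y hY h)
  have hYX1 : Y 1 ≠ X 1 := fun h => hXY.symm (uX1 Y hY h)
  have hYZ2 : Y 2 ≠ Z 2 := fun h => hYZ (uZ2 Y hY h)
  have hZX0 : Z 0 ≠ X 0 := fun h => hXZ.symm (uX0 Z hZ h)
  have hZY1 : Z 1 ≠ Y 1 := fun h => hYZ.symm (uY1 Z hZ h)
  have hZX1 : Z 1 ≠ X 1 := fun h => hXZ.symm (uX1 Z hZ h)
  have hZY2 : Z 2 ≠ Y 2 := fun h => hYZ.symm (uY2 Z hZ h)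
  refine clash hqs (S := ![X 0, Y 1, Z 2]) (S' := ![Z 0, X 1, Y 2])
    (inj3 h1 h2 h3) (inj3 h4 h5 h6) (fun h => hXZ0 (congrFun h 0)) ?_
  intro R hR
  rw [answer_vec, answer_vec]
  by_cases hRX : R = X
  · subst hRX; simp [hXY1, hXZ2, hXZ0, hXY2]
  by_cases hRY : R = Y
  · subst hRY; simp [hYX0, hYZ2, hYZ0, hYX1]
  by_cases hRZ : R = Z
  · subst hRZ; simp [hZX0, hZY1, hZX1, hZY2]
  · have n1 : R 0 ≠ X 0 := fun h => hRX (uX0 R hR h)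
    have n2 : R 1 ≠ Y 1 := fun h => hRY (uY1 R hR h)
    have n3 : R 2 ≠ Z 2 := fun h => hRZ (uZ2 R hR h)
    have n4 : R 0 ≠ Z 0 := fun h => hRZ (uZ0 R hR h)
    have n5 : R 1 ≠ X 1 := fun h => hRX (uX1 R hR h)
    have n6 : R 2 ≠ Y 2 := fun h => hRY (uY2 R hR h)
    simp [n1, n2, n3, n4, n5, n6]

lemma aux {c : ℕ} (hc : 5 ≤ c) {qs : List (Fin 3 → Fin c)} (hqs : Feasible qs)
    {Q₁ Q₂ Q : Fin 3 → Fin c}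
    (h₁ : Q₁ ∈ qs) (h₂ : Q₂ ∈ qs) (hQ : Q ∈ qs)
    (hne : Q₁ ≠ Q₂) (hQ1 : Q ≠ Q₁) (hQ2 : Q ≠ Q₂)
    (o₁ : ∀ i, occ qs i (Q₁ i) = 1) (o₂ : ∀ i, occ qs i (Q₂ i) = 1)
    (e0 : occ qs 0 (Q 0) = 1) (e1 : occ qs 1 (Q 1) = 1) : False := by
  have hnd := hqs.1
  have ua0 := occ_unique_s13 hnd (o₁ 0) h₁ rfl
  have ua1 := occ_unique_s13 hnd (o₁ 1) h₁ rfl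
  have ua2 := occ_unique_s13 hnd (o₁ 2) h₁ rfl
  have ub0 := occ_unique_s13 hnd (o₂ 0) h₂ rfl
  have ub1 := occ_unique_s13 hnd (o₂ 1) h₂ rfl
  have ub2 := occ_unique_s13 hnd (o₂ 2) h₂ rfl
  have uq0 := occ_unique_s13 hnd e0 hQ rfl
  have uq1 := occ_unique_s13 hnd e1 hQ rfl
  have ia := hqs.2.1 Q₁ h₁
  have ib := hqs.2.1 Q₂ h₂
  have ia02 : Q₁ 0 ≠ Q₁ 2 := fun h => absurd (ia h) (by decide)
  have ia12 : Q₁ 1 ≠ Q₁ 2 := fun h => absurd (ia h) (by decide)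
  have ib02 : Q₂ 0 ≠ Q₂ 2 := fun h => absurd (ib h) (by decide)
  have ib12 : Q₂ 1 ≠ Q₂ 2 := fun h => absurd (ib h) (by decide)
  have ab0 : Q₁ 0 ≠ Q₂ 0 := fun h => hne (ub0 Q₁ h₁ h)
  have ab1 : Q₁ 1 ≠ Q₂ 1 := fun h => hne (ub1 Q₁ h₁ h)
  have aq1 : Q₁ 1 ≠ Q 1 := fun h => hQ1.symm (uq1 Q₁ h₁ h)
  have bq1 : Q₂ 1 ≠ Q 1 := fun h => hQ2.symm (uq1 Q₂ h₂ h)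
  have qb0 : Q 0 ≠ Q₂ 0 := fun h => hQ2 (ub0 Q hQ h)
  by_cases hA : Q₁ 0 = Q 1
  · by_cases hB : Q 0 = Q₂ 1
    · by_cases hC : Q₂ 0 = Q₁ 1
      · -- cycle C2: X=Q, Y=Q₁, Z=Q₂
        exact cyc hqs hQ h₁ h₂ hQ1 hQ2 hne uq0 uq1 ua1 ua2 ub2 ub0
          (fun h => qb0 (h.trans hC.symm))
          (fun h => ib12 (hB.symm.trans h))
          (fun h => ib02 (hC.trans h))
          (fun h => ab0.symm (h.trans hA.symm))
          (fun h => ia12 (hC.symm.trans h))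
          (fun h => ia02 (hA.trans h))
      · exact swap01 hc hqs h₁ h₂ hne ua0 ua1 ub0 ub1
          (fun h => bq1 (hA.symm.trans h).symm) hC
    · exact swap01 hc hqs h₂ hQ hQ2.symm ub0 ub1 uq0 uq1
        (fun h => ab0.symm (h.trans hA.symm)) hB
  · by_cases hB : Q 0 = Q₁ 1
    · by_cases hC : Q₂ 0 = Q 1
      · by_cases hD : Q₁ 0 = Q₂ 1
        · -- cycle C1: X=Q, Y=Q₂, Z=Q₁
          exact cyc hqs hQ h₂ h₁ hQ2 hQ1 hne.symm uq0 uq1 ub1 ub2 ua2 ua0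
            (fun h => ab1 (hB.symm.trans h))
            (fun h => ia12 (hB.symm.trans h))
            (fun h => ia02 (hD.trans h))
            (fun h => ab0 (h.trans hC.symm))
            (fun h => ib12 (hD.symm.trans h))
            (fun h => ib02 (hC.trans h))
        · exact swap01 hc hqs h₁ h₂ hne ua0 ua1 ub0 ub1 hD
            (fun h => aq1 (hC.symm.trans h).symm)
      · exact swap01 hc hqs h₂ hQ hQ2.symm ub0 ub1 uq0 uq1 hC
          (fun h => ab1 (hB.symm.trans h))
    · exact swap01 hc hqs h₁ hQ hQ1.symm ua0 ua1 uq0 uq1 hA hB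

lemma comp_e_inj {c : ℕ} (e : Equiv.Perm (Fin 3)) :
    Function.Injective (fun R : Fin 3 → Fin c => R ∘ e) := by
  intro R R' hrr
  funext i
  have := congrFun hrr (e.symm i)
  simpa using this

lemma answer_comp {c : ℕ} (e : Equiv.Perm (Fin 3)) (R S : Fin 3 → Fin c) :
    answer (R ∘ e) (S ∘ e) = answer R S := by
  rw [answer, answer, Finset.card_filter, Finset.card_filter]
  exact Fintype.sum_equiv e _ _ (fun i => rfl)

lemma occ_comp {c : ℕ} (e : Equiv.Perm (Fin 3)) (qs : List (Fin 3 → Fin c)) (i : Fin 3)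
    (x : Fin c) : occ (qs.map (fun R => R ∘ e)) i x = occ qs (e i) x := by
  unfold occ
  rw [List.countP_map]
  rfl

lemma feasible_comp {c : ℕ} (e : Equiv.Perm (Fin 3)) {qs : List (Fin 3 → Fin c)}
    (h : Feasible qs) : Feasible (qs.map (fun R => R ∘ e)) := by
  obtain ⟨hnd, hinj, hdist⟩ := h
  refine ⟨hnd.map (comp_e_inj e), ?_, ?_⟩
  · intro Q hQ
    rw [List.mem_map] at hQ
    obtain ⟨R, hR, rfl⟩ := hQ
    exact (hinj R hR).comp e.injective
  · intro S S' hS hS' hmap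
    have key : ∀ T : Fin 3 → Fin c, (qs.map (fun R => R ∘ e)).map (fun Q => answer Q T)
        = qs.map (fun R => answer R (T ∘ e.symm)) := by
      intro T
      rw [List.map_map]
      apply List.map_congr_left
      intro R _
      show answer (R ∘ e) T = answer R (T ∘ e.symm)
      have h2 := answer_comp e R (T ∘ e.symm)
      rw [← h2]
      congr 1
      funext i
      simp
    rw [key, key] at hmap
    have hfin := hdist _ _ (hS.comp e.symm.injective) (hS'.comp e.symm.injective) hmap
    funext i
    have := congrFun hfin (e i)
    simpa using this

theorem statement13 (c : ℕ) (hc : 5 ≤ c) (qs : List (Fin 3 → Fin c))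
    (hqs : Feasible qs) (Q₁ Q₂ : Fin 3 → Fin c)
    (h₁ : Q₁ ∈ qs) (h₂ : Q₂ ∈ qs) (hne : Q₁ ≠ Q₂)
    (o₁ : ∀ i : Fin 3, occ qs i (Q₁ i) = 1)
    (o₂ : ∀ i : Fin 3, occ qs i (Q₂ i) = 1) :
    ∀ Q ∈ qs, Q ≠ Q₁ → Q ≠ Q₂ →
      ¬ ((occ qs 0 (Q 0) = 1 ∧ occ qs 1 (Q 1) = 1) ∨
         (occ qs 0 (Q 0) = 1 ∧ occ qs 2 (Q 2) = 1) ∨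
         (occ qs 1 (Q 1) = 1 ∧ occ qs 2 (Q 2) = 1)) := by
  intro Q hQ hQ1 hQ2 hcon
  rcases hcon with ⟨ha, hb⟩ | ⟨ha, hb⟩ | ⟨ha, hb⟩
  · exact aux hc hqs h₁ h₂ hQ hne hQ1 hQ2 o₁ o₂ ha hb
  · refine aux (Q₁ := Q₁ ∘ Equiv.swap 1 2) (Q₂ := Q₂ ∘ Equiv.swap 1 2)
      (Q := Q ∘ Equiv.swap 1 2) hc (feasible_comp _ hqs)
      (List.mem_map_of_mem h₁) (List.mem_map_of_mem h₂) (List.mem_map_of_mem hQ)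
      (fun h => hne (comp_e_inj _ h)) (fun h => hQ1 (comp_e_inj _ h))
      (fun h => hQ2 (comp_e_inj _ h)) (fun i => ?_) (fun i => ?_) ?_ ?_
    · rw [occ_comp]; exact o₁ _
    · rw [occ_comp]; exact o₂ _
    · rw [occ_comp]
      show occ qs (Equiv.swap 1 2 0) (Q (Equiv.swap 1 2 0)) = 1
      rw [show (Equiv.swap 1 2 : Equiv.Perm (Fin 3)) 0 = 0 from by decide]
      exact ha
    · rw [occ_comp]
      show occ qs (Equiv.swap 1 2 1) (Q (Equiv.swap 1 2 1)) = 1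
      rw [show (Equiv.swap 1 2 : Equiv.Perm (Fin 3)) 1 = 2 from by decide]
      exact hb
  · refine aux (Q₁ := Q₁ ∘ finRotate 3) (Q₂ := Q₂ ∘ finRotate 3)
      (Q := Q ∘ finRotate 3) hc (feasible_comp _ hqs)
      (List.mem_map_of_mem h₁) (List.mem_map_of_mem h₂) (List.mem_map_of_mem hQ)
      (fun h => hne (comp_e_inj _ h)) (fun h => hQ1 (comp_e_inj _ h))
      (fun h => hQ2 (comp_e_inj _ h)) (fun i => ?_) (fun i => ?_) ?_ ?_
    · rw [occ_comp]; exact o₁ _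
    · rw [occ_comp]; exact o₂ _
    · rw [occ_comp]
      show occ qs (finRotate 3 0) (Q (finRotate 3 0)) = 1
      rw [show (finRotate 3) 0 = 1 from by decide]
      exact ha
    · rw [occ_comp]
      show occ qs (finRotate 3 1) (Q (finRotate 3 1)) = 1
      rw [show (finRotate 3) 1 = 2 from by decide]
      exact hb
end

section
/- For the Static Black-Peg AB Game with 3 pegs and c ≥ 5 colors: if a feasible strategy is such that for each of the three pegs there is a color missing on that peg, then the strategy contains at most one (1,1,1)-question. -/
lemma answer3 {c : ℕ} (Q S : Fin 3 → Fin c) :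
    answer Q S = (if Q 0 = S 0 then 1 else 0) + (if Q 1 = S 1 then 1 else 0)
      + (if Q 2 = S 2 then 1 else 0) := by
  rw [answer, Finset.card_filter, Fin.sum_univ_three]

def tri {c : ℕ} (x y z : Fin c) : Fin 3 → Fin c :=
  fun i => if i = 0 then x else if i = 1 then y else z

@[simp] lemma tri0 {c : ℕ} (x y z : Fin c) : tri x y z 0 = x := rfl
@[simp] lemma tri1 {c : ℕ} (x y z : Fin c) : tri x y z 1 = y := rfl
@[simp] lemma tri2 {c : ℕ} (x y z : Fin c) : tri x y z 2 = z := rfl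

lemma tri_inj {c : ℕ} {x y z : Fin c} (hxy : x ≠ y) (hxz : x ≠ z) (hyz : y ≠ z) :
    Function.Injective (tri x y z) := by
  intro i j h
  fin_cases i <;> fin_cases j <;> simp_all [tri]

lemma exists_avoid {c : ℕ} (hc : 5 ≤ c) (a b d e : Fin c) :
    ∃ t : Fin c, t ≠ a ∧ t ≠ b ∧ t ≠ d ∧ t ≠ e := by
  have h4 : ({a, b, d, e} : Finset (Fin c)).card ≤ 4 := by
    refine le_trans (Finset.card_insert_le _ _) ?_
    refine le_trans (Nat.add_le_add_right (Finset.card_insert_le _ _) 1) ?_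
    refine le_trans (Nat.add_le_add_right (Nat.add_le_add_right (Finset.card_insert_le _ _) 1) 1) ?_
    simp
  have hne : (Finset.univ \ ({a, b, d, e} : Finset (Fin c))).Nonempty := by
    rw [Finset.sdiff_nonempty]
    intro hsub
    have := Finset.card_le_card hsub
    rw [Finset.card_univ, Fintype.card_fin] at this
    omega
  obtain ⟨t, ht⟩ := hne
  simp only [Finset.mem_sdiff, Finset.mem_univ, Finset.mem_insert, Finset.mem_singleton,
    true_and] at ht
  push_neg at ht
  exact ⟨t, ht.1, ht.2.1, ht.2.2.1, ht.2.2.2⟩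

lemma two_le_countP {α : Type*} {p : α → Bool} {l : List α} {a b : α}
    (ha : a ∈ l) (hb : b ∈ l) (hab : a ≠ b) (hpa : p a) (hpb : p b) : 2 ≤ l.countP p := by
  classical
  rw [List.countP_eq_length_filter]
  have hsub : ({a, b} : Finset α) ⊆ (l.filter p).toFinset := by
    intro x hx
    simp only [Finset.mem_insert, Finset.mem_singleton] at hx
    rcases hx with rfl | rfl <;> simp [List.mem_filter, ha, hb, hpa, hpb]
  have h2 : ({a, b} : Finset α).card = 2 := by
    rw [Finset.card_insert_of_notMem (by simpa using hab), Finset.card_singleton]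
  calc 2 = ({a, b} : Finset α).card := h2.symm
    _ ≤ (l.filter p).toFinset.card := Finset.card_le_card hsub
    _ ≤ (l.filter p).length := (l.filter p).toFinset_card_le

lemma occ_unique_s15 {c : ℕ} {qs : List (Fin 3 → Fin c)} {Q R : Fin 3 → Fin c}
    (hQ : Q ∈ qs) (hR : R ∈ qs) (hne : R ≠ Q) {i : Fin 3} (h1 : occ qs i (Q i) = 1) :
    R i ≠ Q i := by
  intro h
  have h2 : 2 ≤ occ qs i (Q i) := by
    rw [occ]
    exact two_le_countP hQ hR (Ne.symm hne) (by simp) (by simp [h])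
  omega

lemma feas_contra {c : ℕ} {qs : List (Fin 3 → Fin c)} (hqs : Feasible qs)
    {S S' : Fin 3 → Fin c} (hS : Function.Injective S) (hS' : Function.Injective S')
    (hSS : S ≠ S') (h : ∀ R ∈ qs, answer R S = answer R S') : False :=
  hSS (hqs.2.2 S S' hS hS' (List.map_congr_left h))

lemma cyclic_contra {c : ℕ} {qs : List (Fin 3 → Fin c)} (hqs : Feasible qs)
    (hmiss : ∀ i : Fin 3, ∃ q : Fin c, ∀ Q ∈ qs, Q i ≠ q)
    {Q Q' : Fin 3 → Fin c} (hQ : Q ∈ qs) (hQ' : Q' ∈ qs) (hne : Q ≠ Q')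
    (hoQ : ∀ i : Fin 3, ∀ R ∈ qs, R ≠ Q → R i ≠ Q i)
    (hoQ' : ∀ i : Fin 3, ∀ R ∈ qs, R ≠ Q' → R i ≠ Q' i)
    (e1 : Q 0 = Q' 1) (e2 : Q 1 = Q' 2) (e3 : Q 2 = Q' 0) : False := by
  have injQ : Function.Injective Q := hqs.2.1 Q hQ
  have hne' : Q' ≠ Q := hne.symm
  have h01 : Q 0 ≠ Q 1 := injQ.ne (by decide)
  have h02 : Q 0 ≠ Q 2 := injQ.ne (by decide)
  have h12 : Q 1 ≠ Q 2 := injQ.ne (by decide)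
  have hii0 : Q' 0 ≠ Q 0 := hoQ 0 Q' hQ' hne'
  have hii1 : Q' 1 ≠ Q 1 := hoQ 1 Q' hQ' hne'
  obtain ⟨m1, hm1⟩ := hmiss 1
  obtain ⟨m2, hm2⟩ := hmiss 2
  have hQm1 : Q 1 ≠ m1 := hm1 Q hQ
  have hQ'm1 : Q' 1 ≠ m1 := hm1 Q' hQ'
  have hQm2 : Q 2 ≠ m2 := hm2 Q hQ
  have hQ'm2 : Q' 2 ≠ m2 := hm2 Q' hQ'
  -- S1 = (Q0, m1, Q1), S2 = (Q2, Q1, m2)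
  apply feas_contra hqs (S := tri (Q 0) m1 (Q 1)) (S' := tri (Q 2) (Q 1) m2)
  · exact tri_inj (e1 ▸ hQ'm1) h01 (fun h => hQm1 h.symm)
  · exact tri_inj h12.symm hQm2 (e2 ▸ hQ'm2)
  · intro h
    exact h02 (congrFun h 0)
  · intro R hR
    by_cases hRQ : R = Q
    · subst hRQ
      simp [answer3, hQm1, h12.symm, h02, hQm2]
    · by_cases hRQ' : R = Q'
      · subst hRQ'
        simp only [answer3, tri0, tri1, tri2]
        erw [if_neg hii0, if_neg hQ'm1, if_pos e2.symm, if_pos e3.symm, if_neg hii1,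
          if_neg hQ'm2]
      · have n1 : R 0 ≠ Q 0 := hoQ 0 R hR hRQ
        have n2 : R 1 ≠ m1 := hm1 R hR
        have n3 : R 2 ≠ Q 1 := e2 ▸ hoQ' 2 R hR hRQ'
        have n4 : R 0 ≠ Q 2 := e3 ▸ hoQ' 0 R hR hRQ'
        have n5 : R 1 ≠ Q 1 := hoQ 1 R hR hRQ
        have n6 : R 2 ≠ m2 := hm2 R hR
        simp [answer3, n1, n2, n3, n4, n5, n6]

lemma swap_contra01 {c : ℕ} (hc : 5 ≤ c) {qs : List (Fin 3 → Fin c)} (hqs : Feasible qs)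
    {Q Q' : Fin 3 → Fin c} (hQ : Q ∈ qs) (hQ' : Q' ∈ qs) (hne : Q ≠ Q')
    (hoQ : ∀ i : Fin 3, ∀ R ∈ qs, R ≠ Q → R i ≠ Q i)
    (hoQ' : ∀ i : Fin 3, ∀ R ∈ qs, R ≠ Q' → R i ≠ Q' i)
    (hab : Q 0 ≠ Q' 1) (hba : Q 1 ≠ Q' 0) : False := by
  have hne' : Q' ≠ Q := hne.symm
  have hii0 : Q 0 ≠ Q' 0 := hoQ' 0 Q hQ hne
  have hii1 : Q 1 ≠ Q' 1 := hoQ' 1 Q hQ hne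
  obtain ⟨t, ht1, ht2, ht3, ht4⟩ := exists_avoid hc (Q 0) (Q 1) (Q' 0) (Q' 1)
  apply feas_contra hqs (S := tri (Q 0) (Q' 1) t) (S' := tri (Q' 0) (Q 1) t)
  · exact tri_inj hab (Ne.symm ht1) (Ne.symm ht4)
  · exact tri_inj (Ne.symm hba) (Ne.symm ht3) (Ne.symm ht2)
  · intro h
    exact hii0 (congrFun h 0)
  · intro R hR
    by_cases hRQ : R = Q
    · subst hRQ
      simp only [answer3, tri0, tri1, tri2]
      erw [if_neg hii1, if_neg hii0]
      simp
      rfl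
    · by_cases hRQ' : R = Q'
      · subst hRQ'
        simp only [answer3, tri0, tri1, tri2]
        erw [if_neg (Ne.symm hii0), if_neg (Ne.symm hii1)]
        simp
        rfl
      · have n1 : R 0 ≠ Q 0 := hoQ 0 R hR hRQ
        have n2 : R 1 ≠ Q' 1 := hoQ' 1 R hR hRQ'
        have n3 : R 0 ≠ Q' 0 := hoQ' 0 R hR hRQ'
        have n4 : R 1 ≠ Q 1 := hoQ 1 R hR hRQ
        simp [answer3, n1, n2, n3, n4]
        rfl

lemma swap_contra02 {c : ℕ} (hc : 5 ≤ c) {qs : List (Fin 3 → Fin c)} (hqs : Feasible qs)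
    {Q Q' : Fin 3 → Fin c} (hQ : Q ∈ qs) (hQ' : Q' ∈ qs) (hne : Q ≠ Q')
    (hoQ : ∀ i : Fin 3, ∀ R ∈ qs, R ≠ Q → R i ≠ Q i)
    (hoQ' : ∀ i : Fin 3, ∀ R ∈ qs, R ≠ Q' → R i ≠ Q' i)
    (hab : Q 0 ≠ Q' 2) (hba : Q 2 ≠ Q' 0) : False := by
  have hne' : Q' ≠ Q := hne.symm
  have hii0 : Q 0 ≠ Q' 0 := hoQ' 0 Q hQ hne
  have hii2 : Q 2 ≠ Q' 2 := hoQ' 2 Q hQ hne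
  obtain ⟨t, ht1, ht2, ht3, ht4⟩ := exists_avoid hc (Q 0) (Q 2) (Q' 0) (Q' 2)
  apply feas_contra hqs (S := tri (Q 0) t (Q' 2)) (S' := tri (Q' 0) t (Q 2))
  · exact tri_inj (Ne.symm ht1) hab ht4
  · exact tri_inj (Ne.symm ht3) (Ne.symm hba) ht2
  · intro h
    exact hii0 (congrFun h 0)
  · intro R hR
    by_cases hRQ : R = Q
    · subst hRQ
      simp only [answer3, tri0, tri1, tri2]
      erw [if_neg hii2, if_neg hii0]
      simp [Nat.add_comm]
      rfl
    · by_cases hRQ' : R = Q'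
      · subst hRQ'
        simp only [answer3, tri0, tri1, tri2]
        erw [if_neg (Ne.symm hii0), if_neg (Ne.symm hii2)]
        simp [Nat.add_comm]
        rfl
      · have n1 : R 0 ≠ Q 0 := hoQ 0 R hR hRQ
        have n2 : R 2 ≠ Q' 2 := hoQ' 2 R hR hRQ'
        have n3 : R 0 ≠ Q' 0 := hoQ' 0 R hR hRQ'
        have n4 : R 2 ≠ Q 2 := hoQ 2 R hR hRQ
        simp [answer3, n1, n2, n3, n4]
        rfl

lemma swap_contra12 {c : ℕ} (hc : 5 ≤ c) {qs : List (Fin 3 → Fin c)} (hqs : Feasible qs)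
    {Q Q' : Fin 3 → Fin c} (hQ : Q ∈ qs) (hQ' : Q' ∈ qs) (hne : Q ≠ Q')
    (hoQ : ∀ i : Fin 3, ∀ R ∈ qs, R ≠ Q → R i ≠ Q i)
    (hoQ' : ∀ i : Fin 3, ∀ R ∈ qs, R ≠ Q' → R i ≠ Q' i)
    (hab : Q 1 ≠ Q' 2) (hba : Q 2 ≠ Q' 1) : False := by
  have hne' : Q' ≠ Q := hne.symm
  have hii1 : Q 1 ≠ Q' 1 := hoQ' 1 Q hQ hne
  have hii2 : Q 2 ≠ Q' 2 := hoQ' 2 Q hQ hne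
  obtain ⟨t, ht1, ht2, ht3, ht4⟩ := exists_avoid hc (Q 1) (Q 2) (Q' 1) (Q' 2)
  apply feas_contra hqs (S := tri t (Q 1) (Q' 2)) (S' := tri t (Q' 1) (Q 2))
  · exact tri_inj ht1 ht4 hab
  · exact tri_inj ht3 ht2 (Ne.symm hba)
  · intro h
    exact hii1 (congrFun h 1)
  · intro R hR
    by_cases hRQ : R = Q
    · subst hRQ
      simp only [answer3, tri0, tri1, tri2]
      erw [if_neg hii2, if_neg hii1]
      simp
      rfl
    · by_cases hRQ' : R = Q'
      · subst hRQ'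
        simp only [answer3, tri0, tri1, tri2]
        erw [if_neg (Ne.symm hii1), if_neg (Ne.symm hii2)]
        simp
        rfl
      · have n1 : R 1 ≠ Q 1 := hoQ 1 R hR hRQ
        have n2 : R 2 ≠ Q' 2 := hoQ' 2 R hR hRQ'
        have n3 : R 1 ≠ Q' 1 := hoQ' 1 R hR hRQ'
        have n4 : R 2 ≠ Q 2 := hoQ 2 R hR hRQ
        simp [answer3, n1, n2, n3, n4]
        rfl

lemma no_two {c : ℕ} (hc : 5 ≤ c) {qs : List (Fin 3 → Fin c)} (hqs : Feasible qs)
    (hmiss : ∀ i : Fin 3, ∃ q : Fin c, ∀ Q ∈ qs, Q i ≠ q)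
    {Q Q' : Fin 3 → Fin c} (hQ : Q ∈ qs) (hQ' : Q' ∈ qs) (hne : Q ≠ Q')
    (hoQ : ∀ i : Fin 3, ∀ R ∈ qs, R ≠ Q → R i ≠ Q i)
    (hoQ' : ∀ i : Fin 3, ∀ R ∈ qs, R ≠ Q' → R i ≠ Q' i) : False := by
  have injQ : Function.Injective Q := hqs.2.1 Q hQ
  have injQ' : Function.Injective Q' := hqs.2.1 Q' hQ'
  by_cases h01 : Q 0 ≠ Q' 1 ∧ Q 1 ≠ Q' 0
  · exact swap_contra01 hc hqs hQ hQ' hne hoQ hoQ' h01.1 h01.2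
  by_cases h02 : Q 0 ≠ Q' 2 ∧ Q 2 ≠ Q' 0
  · exact swap_contra02 hc hqs hQ hQ' hne hoQ hoQ' h02.1 h02.2
  by_cases h12 : Q 1 ≠ Q' 2 ∧ Q 2 ≠ Q' 1
  · exact swap_contra12 hc hqs hQ hQ' hne hoQ hoQ' h12.1 h12.2
  rw [not_and_or, not_ne_iff, not_ne_iff] at h01 h02 h12
  rcases h01 with e01 | e10 <;> rcases h02 with e02 | e20 <;> rcases h12 with e12 | e21
  · exact injQ'.ne (show (1 : Fin 3) ≠ 2 by decide) (e01.symm.trans e02)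
  · exact injQ'.ne (show (1 : Fin 3) ≠ 2 by decide) (e01.symm.trans e02)
  · exact cyclic_contra hqs hmiss hQ hQ' hne hoQ hoQ' e01 e12 e20
  · exact injQ.ne (show (0 : Fin 3) ≠ 2 by decide) (e01.trans e21.symm)
  · exact injQ'.ne (show (0 : Fin 3) ≠ 2 by decide) (e10.symm.trans e12)
  · exact cyclic_contra hqs hmiss hQ' hQ hne.symm hoQ' hoQ e10.symm e21.symm e02.symm
  · exact injQ.ne (show (1 : Fin 3) ≠ 2 by decide) (e10.trans e20.symm)
  · exact injQ.ne (show (1 : Fin 3) ≠ 2 by decide) (e10.trans e20.symm)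

theorem statement15 (c : ℕ) (hc : 5 ≤ c) (qs : List (Fin 3 → Fin c))
    (hqs : Feasible qs)
    (hmiss : ∀ i : Fin 3, ∃ q : Fin c, ∀ Q ∈ qs, Q i ≠ q) :
    qs.countP (fun Q => decide (∀ i : Fin 3, occ qs i (Q i) = 1)) ≤ 1 := by
  by_contra hcon
  push_neg at hcon
  set P : (Fin 3 → Fin c) → Bool := fun Q => decide (∀ i : Fin 3, occ qs i (Q i) = 1) with hP
  have hlen : 2 ≤ (qs.filter P).length := by
    rw [← List.countP_eq_length_filter]
    omega
  have hnd : (qs.filter P).Nodup := hqs.1.filter P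
  set l := qs.filter P with hl
  have h0 : (0 : ℕ) < l.length := by omega
  have h1 : (1 : ℕ) < l.length := by omega
  set Q := l.get ⟨0, h0⟩ with hQdef
  set Q' := l.get ⟨1, h1⟩ with hQ'def
  have hQl : Q ∈ l := l.get_mem _
  have hQ'l : Q' ∈ l := l.get_mem _
  have hQ : Q ∈ qs := List.mem_of_mem_filter hQl
  have hQ' : Q' ∈ qs := List.mem_of_mem_filter hQ'l
  have hne : Q ≠ Q' := by
    intro h
    have := (List.Nodup.get_inj_iff hnd).mp h
    simp at this
  have hPQ : ∀ i : Fin 3, occ qs i (Q i) = 1 := by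
    have hb : P Q = true := List.of_mem_filter (p := P) (l := qs) (hl ▸ hQl)
    rw [hP] at hb
    exact of_decide_eq_true hb
  have hPQ' : ∀ i : Fin 3, occ qs i (Q' i) = 1 := by
    have hb : P Q' = true := List.of_mem_filter (p := P) (l := qs) (hl ▸ hQ'l)
    rw [hP] at hb
    exact of_decide_eq_true hb
  exact no_two hc hqs hmiss hQ hQ' hne
    (fun i R hR hRne => occ_unique_s15 hQ hR hRne (hPQ i))
    (fun i R hR hRne => occ_unique_s15 hQ' hR hRne (hPQ' i))
end
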